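/- Let H be a real Hilbert space, A : H → 2^H maximally monotone, and γ > 0. Then the resolvent of γ·J_A (γ times the resolvent of A, viewed as a single-valued firmly nonexpansive operator) satisfies J_{γ J_A} = Id − γ · J_{(1+γ)^{-1} A} ∘ ((1+γ)^{-1} Id). -/

import Mathlib

/-- For a maximally monotone `A` on a real Hilbert space and `γ > 0`, the resolvent of
`γ J_A` satisfies `J_{γ J_A} = Id − γ J_{(1+γ)⁻¹ A} ∘ ((1+γ)⁻¹ Id)`.  Here `JA` is the
resolvent of `A` and `JB` the resolvent of the scaled operator `(1+γ)⁻¹ A`. -/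
theorem stmt1 {H : Type*} [NormedAddCommGroup H] [InnerProductSpace ℝ H] [CompleteSpace H]
    (A : H → Set H) (γ : ℝ) (hγ : 0 < γ)
    (hmono : ∀ x u y v, u ∈ A x → v ∈ A y → (0 : ℝ) ≤ inner ℝ (x - y) (u - v))
    (hmax : ∀ x u, (∀ y v, v ∈ A y → (0 : ℝ) ≤ inner ℝ (x - y) (u - v)) → u ∈ A x)
    (JA : H → H) (hJA : ∀ x, x - JA x ∈ A (JA x))
    (JB : H → H) (hJB : ∀ x, ∃ u ∈ A (JB x), x - JB x = (1 + γ)⁻¹ • u) :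
    ∀ x : H,
      (x - γ • JB ((1 + γ)⁻¹ • x)) + γ • JA (x - γ • JB ((1 + γ)⁻¹ • x)) = x := by
  intro x
  have hγ1 : (1 + γ) ≠ 0 := by linarith
  set y := (1 + γ)⁻¹ • x with hy
  set b := JB y with hb
  obtain ⟨u, hu, huy⟩ := hJB y
  set p := x - γ • b with hp
  -- u = (1+γ) • (y - b) = x - (1+γ) • b
  have hu' : u = p - b := by
    have : (1 + γ) • (y - b) = (1 + γ) • ((1 + γ)⁻¹ • u) := by rw [huy]
    rw [smul_smul, mul_inv_cancel₀ hγ1, one_smul] at this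
    rw [← this, hp, hy, smul_sub, smul_smul, mul_inv_cancel₀ hγ1, one_smul]
    module
  have hpb : p - b ∈ A b := hu' ▸ hu
  -- resolvent uniqueness: JA p = b
  have h1 := hJA p
  have h2 := hmono b (p - b) (JA p) (p - JA p) hpb h1
  have key : b = JA p := by
    have : ((p - b) - (p - JA p)) = -(b - JA p) := by abel
    rw [this, inner_neg_right] at h2
    have h3 : (inner ℝ (b - JA p) (b - JA p) : ℝ) = 0 :=
      le_antisymm (by linarith) real_inner_self_nonneg
    have := inner_self_eq_zero.mp h3
    rwa [sub_eq_zero] at this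
  rw [← key, hp]
  abel
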